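/- If k ≤ n/2 then λ_1 := 2·∑_{i=1}^{k/2} cos(2πi/n) satisfies λ_1 ≥ c·k for an absolute constant c > 0 (for instance c = 1/2 suffices for all n large enough), i.e., the second-largest eigenvalue of the ring lattice adjacency matrix is of order k. -/

import Mathlib

open Real

/-- If `k ≤ n/2` then `λ_1 = 2·∑_{i=1}^{k/2} cos(2πi/n)` satisfies `λ_1 ≥ c·k` for an
absolute constant `c > 0`, for all `n` large enough: the second-largest eigenvalue of the
ring lattice adjacency matrix is of order `k`. -/
theorem ring_lattice_second_eigenvalue_order_k :
    ∃ c : ℝ, 0 < c ∧ ∃ N : ℕ, ∀ n k : ℕ, N ≤ n → 0 < k → Even k → 2 * k ≤ n →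
      c * k ≤ 2 * ∑ i ∈ Finset.Icc 1 (k / 2), Real.cos (2 * π * i / n) := by
  refine ⟨1/12, by norm_num, 6, ?_⟩
  intro n k hn hk hke hkn
  have hπ := Real.pi_pos
  have hn0 : (0:ℝ) < n := by
    have : (6:ℝ) ≤ n := by exact_mod_cast hn
    linarith
  set m := max 1 (k / 6) with hm
  obtain ⟨j, rfl⟩ := hke
  have h6m : 6 * m ≤ n := by
    rcases max_choice 1 ((j+j) / 6) with h | h <;> rw [hm, h] <;> omega
  have hm2 : m ≤ (j+j) / 2 := by
    rcases max_choice 1 ((j+j) / 6) with h | h <;> rw [hm, h] <;> omega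
  -- terms with i ≤ m are ≥ 1/2
  have hbig : ∀ i ∈ Finset.Icc 1 m, (1/2 : ℝ) ≤ Real.cos (2 * π * i / n) := by
    intro i hi
    rw [Finset.mem_Icc] at hi
    have h6i : (6 : ℝ) * i ≤ n := by
      have : 6 * i ≤ n := by omega
      exact_mod_cast this
    have hi0 : (0:ℝ) ≤ i := Nat.cast_nonneg i
    have hθ0 : (0:ℝ) ≤ 2 * π * i / n := by positivity
    have hθ : 2 * π * i / n ≤ π / 3 := by
      rw [div_le_iff₀ hn0]
      nlinarith
    have := Real.cos_le_cos_of_nonneg_of_le_pi hθ0 (by linarith : π/3 ≤ π) hθ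
    rwa [Real.cos_pi_div_three] at this
  -- all terms in Icc 1 (k/2) are nonnegative
  have hnonneg : ∀ i ∈ Finset.Icc 1 ((j+j)/2), (0:ℝ) ≤ Real.cos (2 * π * i / n) := by
    intro i hi
    rw [Finset.mem_Icc] at hi
    have h4i : (4 : ℝ) * i ≤ n := by
      have : 4 * i ≤ n := by omega
      exact_mod_cast this
    have hi0 : (0:ℝ) ≤ i := Nat.cast_nonneg i
    have hθ0 : (0:ℝ) ≤ 2 * π * i / n := by positivity
    apply Real.cos_nonneg_of_mem_Icc
    constructor
    · linarith
    · rw [div_le_iff₀ hn0]; nlinarith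
  have hsum1 : (m : ℝ) * (1/2) ≤ ∑ i ∈ Finset.Icc 1 m, Real.cos (2 * π * i / n) := by
    have := Finset.card_nsmul_le_sum (Finset.Icc 1 m) (fun i => Real.cos (2 * π * i / n))
      (1/2 : ℝ) hbig
    simpa [Nat.card_Icc, nsmul_eq_mul] using this
  have hsum2 : ∑ i ∈ Finset.Icc 1 m, Real.cos (2 * π * i / n)
      ≤ ∑ i ∈ Finset.Icc 1 ((j+j)/2), Real.cos (2 * π * i / n) := by
    apply Finset.sum_le_sum_of_subset_of_nonneg
    · exact Finset.Icc_subset_Icc_right hm2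
    · intro i hi _; exact hnonneg i hi
  have hkm : ((j+j : ℕ) : ℝ) ≤ 12 * m := by
    have : j + j ≤ 12 * m := by
      rcases max_choice 1 ((j+j) / 6) with h | h <;> rw [hm, h] <;> omega
    exact_mod_cast this
  linarith
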